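/- Let θ ≥ 1, a ≥ 0, and Δ ≥ θ. Then Γ(Δ + a + 1 − θ)·Γ(Δ) / (Γ(Δ + a)·Γ(Δ + 1 − θ)) ≤ 1. -/

import Mathlib

private lemma convex_shift_ineq {f : ℝ → ℝ} (hf : ConvexOn ℝ (Set.Ioi 0) f)
    {x y a : ℝ} (hx : 0 < x) (hxy : x ≤ y) (ha : 0 ≤ a) :
    f (x + a) + f y ≤ f x + f (y + a) := by
  rcases eq_or_lt_of_le (by linarith : x ≤ y + a) with h | h
  · have hxy' : x = y := by linarith
    have ha0 : a = 0 := by linarith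
    simp [hxy', ha0]
  · set d := y + a - x with hd
    have hdpos : 0 < d := by simp [hd]; linarith
    set μ := a / d with hμ
    set lam := (y - x) / d with hlam
    have hμ0 : 0 ≤ μ := div_nonneg ha hdpos.le
    have hlam0 : 0 ≤ lam := div_nonneg (by linarith) hdpos.le
    have hsum : lam + μ = 1 := by rw [hlam, hμ, ← add_div, div_eq_one_iff_eq hdpos.ne']; linarith
    have hy0 : (0:ℝ) < y := lt_of_lt_of_le hx hxy
    have hya : (0:ℝ) < y + a := by linarith
    have h1 : f (x + a) ≤ lam * f x + μ * f (y + a) := by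
      have := hf.2 (Set.mem_Ioi.2 hx) (Set.mem_Ioi.2 hya) hlam0 hμ0 hsum
      have hcomb : lam • x + μ • (y + a) = x + a := by
        simp only [smul_eq_mul, hlam, hμ]
        field_simp
        ring
      rw [hcomb] at this
      simpa using this
    have h2 : f y ≤ μ * f x + lam * f (y + a) := by
      have := hf.2 (Set.mem_Ioi.2 hx) (Set.mem_Ioi.2 hya) hμ0 hlam0 (by linarith)
      have hcomb : μ • x + lam • (y + a) = y := by
        simp only [smul_eq_mul, hμ, hlam]
        field_simp
        ring
      rw [hcomb] at this
      simpa using this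
    have e : lam * f x + μ * f (y + a) + (μ * f x + lam * f (y + a))
        = (lam + μ) * (f x + f (y + a)) := by ring
    rw [hsum, one_mul] at e
    linarith

/-- For `θ ≥ 1`, `a ≥ 0`, `Δ ≥ θ`:
`Γ(Δ+a+1−θ)·Γ(Δ) / (Γ(Δ+a)·Γ(Δ+1−θ)) ≤ 1`. -/
theorem gamma_ratio_le_one_first (θ a Δ : ℝ) (hθ : 1 ≤ θ) (ha : 0 ≤ a) (hΔ : θ ≤ Δ) :
    Real.Gamma (Δ + a + 1 - θ) * Real.Gamma Δ /
      (Real.Gamma (Δ + a) * Real.Gamma (Δ + 1 - θ)) ≤ 1 := by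
  have hx : (0:ℝ) < Δ + 1 - θ := by linarith
  have hΔ0 : (0:ℝ) < Δ := by linarith
  have hxa : (0:ℝ) < Δ + 1 - θ + a := by linarith
  have hΔa : (0:ℝ) < Δ + a := by linarith
  have key := convex_shift_ineq Real.convexOn_log_Gamma hx (by linarith : Δ + 1 - θ ≤ Δ) ha
  simp only [Function.comp] at key
  -- key : log Γ(Δ+1-θ+a) + log Γ Δ ≤ log Γ(Δ+1-θ) + log Γ(Δ+a)
  have g1 := Real.Gamma_pos_of_pos hx
  have g2 := Real.Gamma_pos_of_pos hΔ0
  have g3 := Real.Gamma_pos_of_pos hxa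
  have g4 := Real.Gamma_pos_of_pos hΔa
  have hmul : Real.Gamma (Δ + 1 - θ + a) * Real.Gamma Δ ≤
      Real.Gamma (Δ + a) * Real.Gamma (Δ + 1 - θ) := by
    have := Real.exp_le_exp.2 key
    rw [Real.exp_add, Real.exp_add, Real.exp_log g3, Real.exp_log g2,
      Real.exp_log g1, Real.exp_log g4] at this
    linarith
  have heq : Δ + a + 1 - θ = Δ + 1 - θ + a := by ring
  rw [heq, div_le_one (by positivity)]
  exact hmul
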